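/- Let p = p(M, δ) < 1/2 be the optimal failure probability for the atomic distinguishing problem. Then for uniformly random z ∈ {0,1}^B, any algorithm that receives M samples from D_z and outputs ẑ ∈ {0,1}^* satisfies E[d_edit(z, ẑ)] ≥ c'·B·p/log(1/p) for some absolute constant c' > 0. -/

import Mathlib

open Classical

/-- Binomial probability: Pr[Bin(n,p) = k]. -/
noncomputable def binomP (n : ℕ) (p : ℝ) (k : ℕ) : ℝ :=
  (n.choose k : ℝ) * p ^ k * (1 - p) ^ (n - k)

/-- The pair distribution D_b on ℕ × ℕ. -/
noncomputable def atomD (δ : ℝ) (M : ℕ) (b : Bool) (s : ℕ × ℕ) : ℝ :=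
  if b then binomP (M + 1) (1 - δ) s.1 * binomP M (1 - δ) s.2
  else binomP M (1 - δ) s.1 * binomP (M + 1) (1 - δ) s.2

/-- Failure probability of an M-sample distinguishing algorithm (uniform prior). -/
noncomputable def failProb (δ : ℝ) (M : ℕ) (A : (Fin M → ℕ × ℕ) → Bool) : ℝ :=
  (1 / 2) * ∑' s : Fin M → ℕ × ℕ,
    ((if A s = true then ∏ m, atomD δ M false (s m) else 0)
      + (if A s = false then ∏ m, atomD δ M true (s m) else 0))

/-- Length of a longest common subsequence of two boolean strings. -/
noncomputable def lcsLen (u v : List Bool) : ℕ :=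
  Nat.findGreatest
    (fun k => ∃ w : List Bool, w.length = k ∧ w.Sublist u ∧ w.Sublist v)
    (min u.length v.length)

/-- Edit distance (insertions/deletions): |u| + |v| - 2·|LCS(u,v)|. -/
noncomputable def editDist (u v : List Bool) : ℕ :=
  u.length + v.length - 2 * lcsLen u v

section Chunk1

variable {δ : ℝ} {M : ℕ}

lemma binomP_nonneg (hδ0 : 0 < δ) (hδ1 : δ < 1) (n : ℕ) (k : ℕ) :
    0 ≤ binomP n (1-δ) k := by
  unfold binomP
  have h1 : (0:ℝ) ≤ 1 - δ := by linarith
  have h2 : (0:ℝ) ≤ 1 - (1 - δ) := by linarith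
  positivity

lemma binomP_zero {n k : ℕ} (h : n < k) : binomP n (1-δ) k = 0 := by
  unfold binomP
  rw [Nat.choose_eq_zero_of_lt h]
  simp

lemma binomP_sum (n : ℕ) : ∑ k ∈ Finset.range (n+1), binomP n (1-δ) k = 1 := by
  calc ∑ k ∈ Finset.range (n+1), binomP n (1-δ) k
      = ∑ k ∈ Finset.range (n+1), (1-δ)^k * (1-(1-δ))^(n-k) * (n.choose k : ℝ) :=
        Finset.sum_congr rfl (fun k _ => by unfold binomP; ring)
    _ = ((1-δ) + (1-(1-δ)))^n := (add_pow _ _ n).symm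
    _ = 1 := by norm_num

/-- support finset for one pair -/
def S1 (M : ℕ) : Finset (ℕ × ℕ) := Finset.range (M+2) ×ˢ Finset.range (M+2)

lemma atomD_nonneg (hδ0 : 0 < δ) (hδ1 : δ < 1) (b : Bool) (t : ℕ × ℕ) :
    0 ≤ atomD δ M b t := by
  unfold atomD
  cases b <;> simp <;>
    exact mul_nonneg (binomP_nonneg hδ0 hδ1 _ _) (binomP_nonneg hδ0 hδ1 _ _)

lemma atomD_zero {b : Bool} {t : ℕ × ℕ} (h : t ∉ S1 M) : atomD δ M b t = 0 := by
  have h' : ¬ (t.1 < M + 2 ∧ t.2 < M + 2) := by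
    simpa [S1, Finset.mem_product, Finset.mem_range] using h
  have : M + 1 < t.1 ∨ M + 1 < t.2 := by omega
  unfold atomD
  rcases this with h1 | h1
  · have e1 : binomP (M+1) (1-δ) t.1 = 0 := binomP_zero h1
    have e2 : binomP M (1-δ) t.1 = 0 := binomP_zero (by omega)
    cases b <;> simp [e1, e2]
  · have e1 : binomP (M+1) (1-δ) t.2 = 0 := binomP_zero h1
    have e2 : binomP M (1-δ) t.2 = 0 := binomP_zero (by omega)
    cases b <;> simp [e1, e2]

lemma atomD_sum (b : Bool) : ∑ t ∈ S1 M, atomD δ M b t = 1 := by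
  have hM : ∑ k ∈ Finset.range (M+2), binomP M (1-δ) k = 1 := by
    rw [Finset.sum_range_succ, binomP_zero (by omega), add_zero, binomP_sum]
  have hM1 : ∑ k ∈ Finset.range (M+2), binomP (M+1) (1-δ) k = 1 := binomP_sum _
  cases b
  · calc ∑ t ∈ S1 M, atomD δ M false t
        = ∑ i ∈ Finset.range (M+2), ∑ j ∈ Finset.range (M+2),
            binomP M (1-δ) i * binomP (M+1) (1-δ) j := by
          rw [S1, Finset.sum_product]; simp [atomD]
      _ = (∑ i ∈ Finset.range (M+2), binomP M (1-δ) i)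
            * (∑ j ∈ Finset.range (M+2), binomP (M+1) (1-δ) j) :=
          (Finset.sum_mul_sum _ _ _ _).symm
      _ = 1 := by rw [hM, hM1, one_mul]
  · calc ∑ t ∈ S1 M, atomD δ M true t
        = ∑ i ∈ Finset.range (M+2), ∑ j ∈ Finset.range (M+2),
            binomP (M+1) (1-δ) i * binomP M (1-δ) j := by
          rw [S1, Finset.sum_product]; simp [atomD]
      _ = (∑ i ∈ Finset.range (M+2), binomP (M+1) (1-δ) i)
            * (∑ j ∈ Finset.range (M+2), binomP M (1-δ) j) :=
          (Finset.sum_mul_sum _ _ _ _).symm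
      _ = 1 := by rw [hM, hM1, one_mul]

end Chunk1

section Chunk2

variable {δ : ℝ} {M : ℕ}

/-- per-coordinate sample density -/
noncomputable def PP (δ : ℝ) (M : ℕ) (b : Bool) (t : Fin M → ℕ × ℕ) : ℝ :=
  ∏ m, atomD δ M b (t m)

/-- support finset for one coordinate's samples -/
def Ω1 (M : ℕ) : Finset (Fin M → ℕ × ℕ) := Fintype.piFinset (fun _ => S1 M)

lemma PP_nonneg (hδ0 : 0 < δ) (hδ1 : δ < 1) (b : Bool) (t : Fin M → ℕ × ℕ) :
    0 ≤ PP δ M b t :=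
  Finset.prod_nonneg (fun m _ => atomD_nonneg hδ0 hδ1 b (t m))

lemma PP_zero {b : Bool} {t : Fin M → ℕ × ℕ} (h : t ∉ Ω1 M) : PP δ M b t = 0 := by
  rw [Ω1, Fintype.mem_piFinset] at h
  push_neg at h
  obtain ⟨m, hm⟩ := h
  exact Finset.prod_eq_zero (Finset.mem_univ m) (atomD_zero hm)

lemma PP_sum (b : Bool) : ∑ t ∈ Ω1 M, PP δ M b t = 1 := by
  unfold Ω1 PP
  rw [show (∑ t ∈ Fintype.piFinset (fun _ : Fin M => S1 M), ∏ m, atomD δ M b (t m))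
      = ∏ _m : Fin M, ∑ x ∈ S1 M, atomD δ M b x from
    (Finset.prod_univ_sum _ _).symm]
  simp [atomD_sum]

/-- from the hypothesis: p is at most half the sum of the pointwise minimum -/
lemma p_le_min_sum {p : ℝ}
    (hp : ∀ A : (Fin M → ℕ × ℕ) → Bool, p ≤ failProb δ M A) :
    p ≤ (1/2) * ∑ t ∈ Ω1 M, min (PP δ M false t) (PP δ M true t) := by
  have h := hp (fun t => decide (PP δ M false t ≤ PP δ M true t))
  rw [failProb] at h
  have he : ∀ s : Fin M → ℕ × ℕ,
      ((if (decide (PP δ M false s ≤ PP δ M true s)) = true then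
          ∏ m, atomD δ M false (s m) else 0)
        + (if (decide (PP δ M false s ≤ PP δ M true s)) = false then
          ∏ m, atomD δ M true (s m) else 0))
      = min (PP δ M false s) (PP δ M true s) := by
    intro s
    by_cases hle : PP δ M false s ≤ PP δ M true s
    · rw [if_pos (decide_eq_true hle), if_neg (by simp [hle]), add_zero,
        min_eq_left hle, PP]
    · rw [if_neg (by simp [hle]), if_pos (by simp [hle]), zero_add,
        min_eq_right (le_of_not_ge hle), PP]
  rw [tsum_congr he] at h
  rwa [tsum_eq_sum (s := Ω1 M) (fun t ht => by
    rw [PP_zero ht, PP_zero ht]; simp)] at h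

lemma max_sum_le {p : ℝ}
    (hp : ∀ A : (Fin M → ℕ × ℕ) → Bool, p ≤ failProb δ M A) :
    ∑ t ∈ Ω1 M, max (PP δ M false t) (PP δ M true t) ≤ 2 * (1 - p) := by
  have h1 : ∑ t ∈ Ω1 M, (max (PP δ M false t) (PP δ M true t)
      + min (PP δ M false t) (PP δ M true t))
      = ∑ t ∈ Ω1 M, (PP δ M false t + PP δ M true t) :=
    Finset.sum_congr rfl (fun t _ => max_add_min _ _)
  have h2 := p_le_min_sum hp
  have h3 := PP_sum (δ := δ) (M := M) false
  have h4 := PP_sum (δ := δ) (M := M) true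
  rw [Finset.sum_add_distrib, Finset.sum_add_distrib, h3, h4] at h1
  linarith

end Chunk2

section Chunk3

variable {δ : ℝ} {M B : ℕ}

/-- support finset for all samples -/
def ΩB (M B : ℕ) : Finset (Fin M → Fin B → ℕ × ℕ) :=
  Fintype.piFinset fun _ => Fintype.piFinset fun _ => S1 M

/-- joint density of samples given z -/
noncomputable def W (δ : ℝ) (M B : ℕ) (z : Fin B → Bool)
    (s : Fin M → Fin B → ℕ × ℕ) : ℝ :=
  ∏ m, ∏ b, atomD δ M (z b) (s m b)

lemma sum_omega (F : Fin B → (Fin M → ℕ × ℕ) → ℝ) :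
    ∑ s ∈ ΩB M B, ∏ b, F b (fun m => s m b) = ∏ b, ∑ t ∈ Ω1 M, F b t := by
  rw [show (∏ b, ∑ t ∈ Ω1 M, F b t)
      = ∑ g ∈ Fintype.piFinset (fun _ : Fin B => Ω1 M), ∏ b, F b (g b) from
    Finset.prod_univ_sum _ _]
  refine Finset.sum_nbij' (fun s => fun b m => s m b) (fun g => fun m b => g b m)
    ?_ ?_ ?_ ?_ ?_
  · intro s hs
    simp only [ΩB, Fintype.mem_piFinset, Ω1] at hs ⊢
    intro b m; exact hs m b
  · intro g hg
    simp only [ΩB, Fintype.mem_piFinset, Ω1] at hg ⊢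
    intro m b; exact hg b m
  · intro s _; rfl
  · intro g _; rfl
  · intro s _; rfl

lemma W_eq (z : Fin B → Bool) (s : Fin M → Fin B → ℕ × ℕ) :
    W δ M B z s = ∏ b, PP δ M (z b) (fun m => s m b) := by
  rw [W, Finset.prod_comm]; rfl

lemma W_nonneg (hδ0 : 0 < δ) (hδ1 : δ < 1) (z : Fin B → Bool)
    (s : Fin M → Fin B → ℕ × ℕ) : 0 ≤ W δ M B z s :=
  Finset.prod_nonneg fun m _ =>
    Finset.prod_nonneg fun b _ => atomD_nonneg hδ0 hδ1 _ _

lemma W_zero {z : Fin B → Bool} {s : Fin M → Fin B → ℕ × ℕ}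
    (h : s ∉ ΩB M B) : W δ M B z s = 0 := by
  simp only [ΩB, Fintype.mem_piFinset] at h
  push_neg at h
  obtain ⟨m, b, hmb⟩ := h
  exact Finset.prod_eq_zero (Finset.mem_univ m)
    (Finset.prod_eq_zero (Finset.mem_univ b) (atomD_zero hmb))

lemma W_sum (z : Fin B → Bool) : ∑ s ∈ ΩB M B, W δ M B z s = 1 := by
  rw [show (∑ s ∈ ΩB M B, W δ M B z s)
      = ∑ s ∈ ΩB M B, ∏ b, PP δ M (z b) (fun m => s m b) from
    Finset.sum_congr rfl fun s _ => W_eq z s]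
  rw [sum_omega]
  simp [PP_sum]

set_option maxHeartbeats 1000000 in
/-- the exact recovery bound -/
lemma recovery {p : ℝ} (hδ0 : 0 < δ) (hδ1 : δ < 1) (hp2 : p < 1/2)
    (hp : ∀ A : (Fin M → ℕ × ℕ) → Bool, p ≤ failProb δ M A)
    (G : (Fin M → Fin B → ℕ × ℕ) → List Bool) :
    ∑ z : Fin B → Bool, ∑ s ∈ ΩB M B,
      W δ M B z s * (if G s = List.ofFn z then 1 else 0)
      ≤ 2^B * (1-p)^B := by
  set Q : (Fin M → Fin B → ℕ × ℕ) → ℝ :=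
    fun s => ∏ b, max (PP δ M false (fun m => s m b)) (PP δ M true (fun m => s m b))
    with hQ
  have hQnn : ∀ s, 0 ≤ Q s := fun s =>
    Finset.prod_nonneg fun b _ => le_max_of_le_left (PP_nonneg hδ0 hδ1 _ _)
  have hWQ : ∀ (z : Fin B → Bool) s, W δ M B z s ≤ Q s := by
    intro z s
    rw [W_eq]
    refine Finset.prod_le_prod (fun b _ => PP_nonneg hδ0 hδ1 _ _) (fun b _ => ?_)
    cases hzb : z b
    · exact le_max_left _ _
    · exact le_max_right _ _
  have key : ∀ s ∈ ΩB M B,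
      ∑ z : Fin B → Bool, W δ M B z s * (if G s = List.ofFn z then 1 else 0) ≤ Q s := by
    intro s _
    by_cases h : ∃ z0 : Fin B → Bool, G s = List.ofFn z0
    · obtain ⟨z0, hz0⟩ := h
      have : ∀ z : Fin B → Bool, z ∈ Finset.univ → z ≠ z0 →
          W δ M B z s * (if G s = List.ofFn z then 1 else 0) = 0 := by
        intro z _ hz
        rw [if_neg, mul_zero]
        intro hc
        exact hz (List.ofFn_injective (hc.symm.trans hz0))
      rw [Finset.sum_eq_single_of_mem z0 (Finset.mem_univ _) this]
      calc W δ M B z0 s * (if G s = List.ofFn z0 then 1 else 0)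
          ≤ W δ M B z0 s * 1 := by
            refine mul_le_mul_of_nonneg_left ?_ (W_nonneg hδ0 hδ1 _ _)
            split_ifs <;> norm_num
        _ ≤ Q s := by rw [mul_one]; exact hWQ z0 s
    · push_neg at h
      have : ∀ z : Fin B → Bool,
          W δ M B z s * (if G s = List.ofFn z then 1 else 0) = 0 := by
        intro z; rw [if_neg (h z), mul_zero]
      simp only [this, Finset.sum_const_zero]
      exact hQnn s
  calc ∑ z : Fin B → Bool, ∑ s ∈ ΩB M B,
        W δ M B z s * (if G s = List.ofFn z then 1 else 0)
      = ∑ s ∈ ΩB M B, ∑ z : Fin B → Bool,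
        W δ M B z s * (if G s = List.ofFn z then 1 else 0) := Finset.sum_comm
    _ ≤ ∑ s ∈ ΩB M B, Q s := Finset.sum_le_sum key
    _ = ∏ _b : Fin B, ∑ t ∈ Ω1 M,
          max (PP δ M false t) (PP δ M true t) := by
        simp only [hQ]
        exact sum_omega (fun b t => max (PP δ M false t) (PP δ M true t))
    _ = (∑ t ∈ Ω1 M, max (PP δ M false t) (PP δ M true t))^B := by
        rw [Finset.prod_const, Finset.card_univ, Fintype.card_fin]
    _ ≤ (2*(1-p))^B := by
        refine pow_le_pow_left₀ ?_ (max_sum_le hp) B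
        exact Finset.sum_nonneg fun t _ => le_max_of_le_left (PP_nonneg hδ0 hδ1 _ _)
    _ = 2^B * (1-p)^B := mul_pow _ _ _

end Chunk3

section Chunk4

/-- merge: at `true` positions of the mask take from `e`, at `false` from `w` -/
def interleave : List Bool → List Bool → List Bool → List Bool
  | [], _, _ => []
  | true :: m, e, w => e.headI :: interleave m e.tail w
  | false :: m, e, w => w.headI :: interleave m e w.tail

/-- extract the sublist at the `true` positions of the mask -/
def extract : List Bool → List Bool → List Bool
  | [], _ => []
  | true :: m, v => v.headI :: extract m v.tail
  | false :: m, v => extract m v.tail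

lemma interleave_spec {w u : List Bool} (h : w.Sublist u) :
    ∃ m e : List Bool, m.length = u.length ∧ m.count true = u.length - w.length ∧
      e.length = m.count true ∧ interleave m e w = u := by
  induction h with
  | slnil => exact ⟨[], [], rfl, rfl, rfl, rfl⟩
  | cons a h ih =>
      obtain ⟨m, e, h1, h2, h3, h4⟩ := ih
      refine ⟨true :: m, a :: e, by simp [h1], ?_, by simp [h3], by simp [interleave, h4]⟩
      simp only [List.count_cons, List.length_cons]
      rw [h2]
      have := h.length_le
      simp
      omega
  | cons_cons a h ih =>
      obtain ⟨m, e, h1, h2, h3, h4⟩ := ih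
      refine ⟨false :: m, e, by simp [h1], ?_, h3, by simp [interleave, h4]⟩
      simp only [List.count_cons, List.length_cons]
      rw [h2]
      simp

lemma extract_spec {w v : List Bool} (h : w.Sublist v) :
    ∃ m : List Bool, m.length = v.length ∧ m.count true = w.length ∧
      extract m v = w := by
  induction h with
  | slnil => exact ⟨[], rfl, rfl, rfl⟩
  | cons a h ih =>
      obtain ⟨m, h1, h2, h3⟩ := ih
      exact ⟨false :: m, by simp [h1], by simp [h2], by simp [extract, h3]⟩
  | cons_cons a h ih =>
      obtain ⟨m, h1, h2, h3⟩ := ih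
      exact ⟨true :: m, by simp [h1], by simp [h2], by simp [extract, h3]⟩

lemma extract_nil_of_all_false : ∀ k, extract (List.replicate k false) [] = [] := by
  intro k
  induction k with
  | zero => rfl
  | succ n ih => simpa [List.replicate_succ, extract] using ih

lemma extract_append_replicate_false :
    ∀ (m : List Bool) (v : List Bool) (k : ℕ), v.length ≤ m.length →
      extract (m ++ List.replicate k false) v = extract m v := by
  intro m
  induction m with
  | nil =>
      intro v k h
      have : v = [] := List.eq_nil_of_length_eq_zero (Nat.le_zero.mp h)
      subst this
      simp [extract, extract_nil_of_all_false]
  | cons a m ih =>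
      intro v k h
      have hlen : v.tail.length ≤ m.length := by
        rw [List.length_tail]
        simp only [List.length_cons] at h
        omega
      cases a
      · simp only [List.cons_append, extract, List.append_eq]
        rw [ih v.tail k hlen]
      · simp only [List.cons_append, extract, List.append_eq]
        rw [ih v.tail k hlen]

end Chunk4


section Chunk5

lemma sum_map_ite (l : List Bool) :
    (l.map fun b => if b = true then (1:ℕ) else 0).sum = l.count true := by
  induction l with
  | nil => rfl
  | cons a l ih =>
      cases a <;> simp [List.count_cons, ih, Nat.add_comm]

lemma count_true_eq (l : List Bool) :
    (Finset.univ.filter fun i : Fin l.length => l.get i = true).card = l.count true := by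
  rw [Finset.card_filter]
  have h1 : (List.ofFn (fun i : Fin l.length => if l.get i = true then (1:ℕ) else 0)).sum
      = ∑ i : Fin l.length, if l.get i = true then (1:ℕ) else 0 := List.sum_ofFn
  rw [← h1, show (List.ofFn fun i : Fin l.length => if l.get i = true then (1:ℕ) else 0)
    = l.map (fun b => if b = true then (1:ℕ) else 0) from
    List.ofFn_getElem_eq_map l (fun b => if b = true then (1:ℕ) else 0), sum_map_ite]

lemma mask_to_fn (l : List Bool) (n : ℕ) (h : l.length = n) :
    ∃ f : Fin n → Bool, List.ofFn f = l ∧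
      (Finset.univ.filter fun i => f i = true).card = l.count true := by
  subst h
  exact ⟨l.get, List.ofFn_get l, count_true_eq l⟩

noncomputable def decode (B R : ℕ) (f : Fin (B+R) → Bool) (g : Fin B → Bool)
    (e : Fin R → Bool) (v : List Bool) : List Bool :=
  interleave (List.ofFn g) (List.ofFn e) (extract (List.ofFn f) v)

/-- exists a common subsequence of length lcsLen -/
lemma lcs_exists (u v : List Bool) :
    ∃ w : List Bool, w.length = lcsLen u v ∧ w.Sublist u ∧ w.Sublist v := by
  have h0 : ∃ w : List Bool, w.length = 0 ∧ w.Sublist u ∧ w.Sublist v :=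
    ⟨[], rfl, List.nil_sublist u, List.nil_sublist v⟩
  unfold lcsLen
  exact Nat.findGreatest_spec
    (P := fun k => ∃ w : List Bool, w.length = k ∧ w.Sublist u ∧ w.Sublist v)
    (Nat.zero_le _) h0

lemma lcsLen_le (u v : List Bool) : lcsLen u v ≤ min u.length v.length :=
  Nat.findGreatest_le _

lemma editDist_eq_zero {u v : List Bool} (h : editDist u v = 0) : u = v := by
  obtain ⟨w, hwl, hwu, hwv⟩ := lcs_exists u v
  have h1 := lcsLen_le u v
  have h2 : u.length + v.length - 2 * lcsLen u v = 0 := h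
  have h3 : w.length = u.length ∧ w.length = v.length := by
    rw [hwl]; omega
  have e1 : w = u := hwu.eq_of_length h3.1
  have e2 : w = v := hwv.eq_of_length h3.2
  exact e1.symm.trans e2

lemma decode_cover {B R : ℕ} (hRB : R ≤ B) (z : Fin B → Bool) (v : List Bool)
    (hd : editDist (List.ofFn z) v ≤ R) :
    ∃ (f : Fin (B+R) → Bool) (g : Fin B → Bool) (e : Fin R → Bool),
      (Finset.univ.filter fun i => f i = true).card = B - R ∧
      (Finset.univ.filter fun i => g i = true).card = R ∧
      decode B R f g e v = List.ofFn z := by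
  obtain ⟨w₀, hw₀l, hw₀u, hw₀v⟩ := lcs_exists (List.ofFn z) v
  have hlen : (List.ofFn z).length = B := List.length_ofFn
  have hLle := lcsLen_le (List.ofFn z) v
  rw [hlen] at hLle
  have hed : B + v.length - 2 * lcsLen (List.ofFn z) v ≤ R := by
    rw [editDist, hlen] at hd; exact hd
  have hL1 : B - R ≤ lcsLen (List.ofFn z) v := by omega
  have hL2 : v.length ≤ B + R := by omega
  set w : List Bool := w₀.take (B - R) with hw
  have hwlen : w.length = B - R := by
    rw [hw, List.length_take, hw₀l]; omega
  have hwu : w.Sublist (List.ofFn z) := (List.take_sublist _ _).trans hw₀u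
  have hwv : w.Sublist v := (List.take_sublist _ _).trans hw₀v
  obtain ⟨m1, e1, hm1l, hm1c, he1l, hint⟩ := interleave_spec hwu
  rw [hlen] at hm1l
  rw [hlen, hwlen] at hm1c
  have hm1c' : m1.count true = R := by rw [hm1c]; omega
  obtain ⟨m2, hm2l, hm2c, hext⟩ := extract_spec hwv
  set m2' : List Bool := m2 ++ List.replicate (B + R - v.length) false with hm2'
  have hm2'l : m2'.length = B + R := by
    rw [hm2', List.length_append, List.length_replicate, hm2l]; omega
  have hm2'c : m2'.count true = B - R := by
    rw [hm2', List.count_append, List.count_replicate]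
    simp [hm2c, hwlen]
  have hm2'ext : extract m2' v = w := by
    rw [hm2', extract_append_replicate_false m2 v _ (le_of_eq hm2l.symm), hext]
  obtain ⟨f, hf1, hf2⟩ := mask_to_fn m2' (B+R) hm2'l
  obtain ⟨g, hg1, hg2⟩ := mask_to_fn m1 B hm1l
  obtain ⟨e, he1, _⟩ := mask_to_fn e1 R (by rw [he1l, hm1c'])
  refine ⟨f, g, e, by rw [hf2, hm2'c], by rw [hg2, hm1c'], ?_⟩
  rw [decode, hf1, hg1, he1, hm2'ext, hint]

end Chunk5

section Chunk6

/-- the set of masks with exactly k ones -/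
noncomputable def maskSet (n k : ℕ) : Finset (Fin n → Bool) :=
  Finset.univ.filter fun f => (Finset.univ.filter fun i => f i = true).card = k

lemma maskSet_card (n k : ℕ) : (maskSet n k).card ≤ n.choose k := by
  have h : (Finset.powersetCard k (Finset.univ : Finset (Fin n))).card = n.choose k := by
    rw [Finset.card_powersetCard, Finset.card_univ, Fintype.card_fin]
  rw [← h]
  refine Finset.card_le_card_of_injOn
    (fun f => Finset.univ.filter fun i => f i = true) ?_ ?_
  · intro f hf
    rw [Finset.mem_coe, Finset.mem_powersetCard]
    exact ⟨Finset.subset_univ _, (Finset.mem_filter.mp (Finset.mem_coe.mp hf)).2⟩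
  · intro f1 h1 f2 h2 heq
    funext i
    have := Finset.ext_iff.mp heq i
    simp only [Finset.mem_filter, Finset.mem_univ, true_and] at this
    cases hf1 : f1 i <;> cases hf2 : f2 i
    · rfl
    · rw [hf1, hf2] at this; simp at this
    · rw [hf1, hf2] at this; simp at this
    · rfl

lemma pow_self_le (k : ℕ) : (k:ℝ)^k ≤ Real.exp 1 ^ k * (k.factorial : ℝ) := by
  induction k with
  | zero => simp
  | succ k ih =>
      rcases Nat.eq_zero_or_pos k with hk | hk
      · subst hk
        simp only [Nat.cast_zero, Nat.factorial_one, Nat.cast_one, mul_one, pow_one,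
          zero_add, Nat.factorial]
        nlinarith [Real.add_one_le_exp (1:ℝ)]
      · have hkpos : (0:ℝ) < k := by exact_mod_cast hk
        have h1 : ((k:ℝ)+1)^k ≤ Real.exp 1 * (k:ℝ)^k := by
          have he : ((k:ℝ)+1)/(k:ℝ) ≤ Real.exp ((k:ℝ)⁻¹) := by
            rw [add_div, div_self (ne_of_gt hkpos)]
            have := Real.add_one_le_exp ((k:ℝ)⁻¹)
            rw [add_comm] at this
            simpa [one_div] using this
          have h2 : (((k:ℝ)+1)/(k:ℝ))^k ≤ Real.exp ((k:ℝ)⁻¹)^k :=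
            pow_le_pow_left₀ (by positivity) he k
          rw [← Real.exp_nat_mul] at h2
          rw [mul_inv_cancel₀ (ne_of_gt hkpos)] at h2
          have h3 : (((k:ℝ)+1)/(k:ℝ))^k * (k:ℝ)^k = ((k:ℝ)+1)^k := by
            rw [div_pow, div_mul_cancel₀]
            positivity
          calc ((k:ℝ)+1)^k = (((k:ℝ)+1)/(k:ℝ))^k * (k:ℝ)^k := h3.symm
            _ ≤ Real.exp 1 * (k:ℝ)^k := by
                refine mul_le_mul_of_nonneg_right ?_ (by positivity)
                exact h2
        have hfact : ((k+1).factorial : ℝ) = ((k:ℝ)+1) * (k.factorial : ℝ) := by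
          rw [Nat.factorial_succ]; push_cast; ring
        push_cast
        calc ((k:ℝ)+1)^(k+1) = ((k:ℝ)+1)^k * ((k:ℝ)+1) := by ring
          _ ≤ Real.exp 1 * (k:ℝ)^k * ((k:ℝ)+1) := by
              refine mul_le_mul_of_nonneg_right h1 (by positivity)
          _ ≤ Real.exp 1 * (Real.exp 1 ^ k * (k.factorial : ℝ)) * ((k:ℝ)+1) := by
              refine mul_le_mul_of_nonneg_right
                (mul_le_mul_of_nonneg_left ih (le_of_lt (Real.exp_pos 1))) (by positivity)
          _ = Real.exp 1 ^ (k+1) * ((k+1).factorial : ℝ) := by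
              rw [hfact, pow_succ]; ring

lemma choose_le_pow_real {n k : ℕ} (hk : 1 ≤ k) :
    (n.choose k : ℝ) ≤ (Real.exp 1 * n / k)^k := by
  have hkpos : (0:ℝ) < k := by exact_mod_cast hk
  have h1 : (n.choose k : ℝ) ≤ (n:ℝ)^k / (k.factorial : ℝ) := Nat.choose_le_pow_div k n
  have h2 := pow_self_le k
  have hfpos : (0:ℝ) < (k.factorial : ℝ) := by exact_mod_cast k.factorial_pos
  rw [div_pow, mul_pow]
  rw [le_div_iff₀ (by positivity)]
  calc (n.choose k : ℝ) * (k:ℝ)^k ≤ ((n:ℝ)^k / (k.factorial : ℝ)) * (Real.exp 1 ^ k * (k.factorial : ℝ)) := by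
        refine mul_le_mul h1 h2 (by positivity) (by positivity)
    _ = Real.exp 1 ^ k * (n:ℝ)^k := by field_simp

end Chunk6

section Chunk7

variable {δ : ℝ} {M B : ℕ}

/-- index set for the union bound -/
noncomputable def Jset (B R : ℕ) :
    Finset ((Fin (B+R) → Bool) × (Fin B → Bool) × (Fin R → Bool)) :=
  (maskSet (B+R) (B-R)) ×ˢ ((maskSet B R) ×ˢ Finset.univ)

lemma Jset_card (B R : ℕ) :
    (Jset B R).card ≤ (B+R).choose (B-R) * (B.choose R * 2^R) := by
  rw [Jset, Finset.card_product, Finset.card_product]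
  refine Nat.mul_le_mul (maskSet_card _ _) (Nat.mul_le_mul (maskSet_card _ _) ?_)
  rw [Finset.card_univ, Fintype.card_fun, Fintype.card_bool, Fintype.card_fin]

lemma pointwise_union_bound {R : ℕ} (hRB : R ≤ B) (z : Fin B → Bool) (v : List Bool)
    (hd : editDist (List.ofFn z) v ≤ R) :
    (1:ℝ) ≤ ∑ j ∈ Jset B R,
      (if decode B R j.1 j.2.1 j.2.2 v = List.ofFn z then 1 else 0) := by
  obtain ⟨f, g, e, hf, hg, hdec⟩ := decode_cover hRB z v hd
  have hmem : (f, g, e) ∈ Jset B R := by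
    rw [Jset, Finset.mem_product, Finset.mem_product]
    refine ⟨?_, ?_, Finset.mem_univ _⟩
    · rw [maskSet, Finset.mem_filter]; exact ⟨Finset.mem_univ _, hf⟩
    · rw [maskSet, Finset.mem_filter]; exact ⟨Finset.mem_univ _, hg⟩
  have := Finset.single_le_sum
    (f := fun j : (Fin (B+R) → Bool) × (Fin B → Bool) × (Fin R → Bool) =>
      (if decode B R j.1 j.2.1 j.2.2 v = List.ofFn z then (1:ℝ) else 0))
    (fun j _ => by split_ifs <;> norm_num) hmem
  simpa [hdec] using this

set_option maxHeartbeats 1000000 in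
lemma union_bound {p : ℝ} {R : ℕ} (hδ0 : 0 < δ) (hδ1 : δ < 1) (hp2 : p < 1/2)
    (hp : ∀ A : (Fin M → ℕ × ℕ) → Bool, p ≤ failProb δ M A)
    (hRB : R ≤ B) (Ahat : (Fin M → Fin B → ℕ × ℕ) → List Bool) :
    ∑ z : Fin B → Bool, ∑ s ∈ ΩB M B,
      W δ M B z s * (if editDist (List.ofFn z) (Ahat s) ≤ R then 1 else 0)
      ≤ ((B+R).choose (B-R) * (B.choose R * 2^R) : ℕ) * (2^B * (1-p)^B) := by
  have step1 : ∀ (z : Fin B → Bool) (s : Fin M → Fin B → ℕ × ℕ),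
      W δ M B z s * (if editDist (List.ofFn z) (Ahat s) ≤ R then 1 else 0)
      ≤ ∑ j ∈ Jset B R, W δ M B z s *
          (if decode B R j.1 j.2.1 j.2.2 (Ahat s) = List.ofFn z then 1 else 0) := by
    intro z s
    rw [← Finset.mul_sum]
    by_cases hd : editDist (List.ofFn z) (Ahat s) ≤ R
    · rw [if_pos hd, mul_one]
      have h2 := mul_le_mul_of_nonneg_left (pointwise_union_bound hRB z (Ahat s) hd)
        (W_nonneg hδ0 hδ1 z s)
      rw [mul_one] at h2
      exact h2
    · rw [if_neg hd, mul_zero]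
      refine mul_nonneg (W_nonneg hδ0 hδ1 z s) (Finset.sum_nonneg fun j _ => ?_)
      split_ifs <;> norm_num
  calc ∑ z : Fin B → Bool, ∑ s ∈ ΩB M B,
        W δ M B z s * (if editDist (List.ofFn z) (Ahat s) ≤ R then 1 else 0)
      ≤ ∑ z : Fin B → Bool, ∑ s ∈ ΩB M B, ∑ j ∈ Jset B R, W δ M B z s *
          (if decode B R j.1 j.2.1 j.2.2 (Ahat s) = List.ofFn z then 1 else 0) :=
        Finset.sum_le_sum fun z _ => Finset.sum_le_sum fun s _ => step1 z s
    _ = ∑ z : Fin B → Bool, ∑ j ∈ Jset B R, ∑ s ∈ ΩB M B, W δ M B z s *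
          (if decode B R j.1 j.2.1 j.2.2 (Ahat s) = List.ofFn z then 1 else 0) :=
        Finset.sum_congr rfl fun z _ => Finset.sum_comm
    _ = ∑ j ∈ Jset B R, ∑ z : Fin B → Bool, ∑ s ∈ ΩB M B, W δ M B z s *
          (if decode B R j.1 j.2.1 j.2.2 (Ahat s) = List.ofFn z then 1 else 0) :=
        Finset.sum_comm
    _ ≤ ∑ _j ∈ Jset B R, (2:ℝ)^B * (1-p)^B := by
        refine Finset.sum_le_sum fun j _ => ?_
        exact recovery hδ0 hδ1 hp2 hp (fun s => decode B R j.1 j.2.1 j.2.2 (Ahat s))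
    _ = ((Jset B R).card : ℝ) * (2^B * (1-p)^B) := by
        rw [Finset.sum_const, nsmul_eq_mul]
    _ ≤ ((B+R).choose (B-R) * (B.choose R * 2^R) : ℕ) * (2^B * (1-p)^B) := by
        refine mul_le_mul_of_nonneg_right ?_ ?_
        · exact_mod_cast Jset_card B R
        · have h1 : (0:ℝ) ≤ 1 - p := by linarith
          positivity

end Chunk7

section Chunk8

lemma log2000_le : Real.log 2000 ≤ 8 := by
  rw [Real.log_le_iff_le_exp (by norm_num)]
  have h1 : ((2.7182818283:ℝ))^(8:ℕ) ≤ (Real.exp 1)^(8:ℕ) :=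
    pow_le_pow_left₀ (by norm_num) (le_of_lt Real.exp_one_gt_d9) 8
  have h2 : (Real.exp 1)^(8:ℕ) = Real.exp 8 := by
    rw [← Real.exp_nat_mul]; norm_num
  rw [h2] at h1
  refine le_trans ?_ h1
  norm_num

lemma count_bound {B R : ℕ} {p L x : ℝ} (hB : 1 ≤ B) (hp0 : 0 < p) (hp2 : p ≤ 1/2)
    (hLlog : Real.log (1/p) ≤ L) (hL : Real.log 2 ≤ L)
    (hx : x = p*B/(1000*L)) (hR : R = ⌊x⌋₊) :
    (((B+R).choose (B-R) * (B.choose R * 2^R) : ℕ) : ℝ) ≤ Real.exp (p*B/2) := by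
  have hlog2 : (0.6931:ℝ) ≤ Real.log 2 := le_of_lt (by
    have := Real.log_two_gt_d9; linarith)
  have hL0 : (0:ℝ) < L := lt_of_lt_of_le (by linarith) hL
  have hBpos : (0:ℝ) < B := by exact_mod_cast hB
  have hxpos : 0 ≤ x := by
    rw [hx]; positivity
  have hRx : (R:ℝ) ≤ x := by rw [hR]; exact Nat.floor_le hxpos
  have hxB : x ≤ B/2 := by
    rw [hx]
    rw [div_le_iff₀ (by positivity)]
    nlinarith
  have hRB2 : (R:ℝ) ≤ B/2 := le_trans hRx hxB
  have hRB : R ≤ B := by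
    have h1 : (R:ℝ) ≤ B := by linarith
    exact_mod_cast h1
  rcases Nat.eq_zero_or_pos R with hR0 | hR1
  · subst hR0
    simp only [Nat.add_zero, Nat.sub_zero, Nat.choose_self, Nat.choose_zero_right,
      pow_zero, Nat.cast_one, one_mul, mul_one]
    have h0 : (0:ℝ) ≤ p*B/2 := by positivity
    calc (1:ℝ) = Real.exp 0 := Real.exp_zero.symm
      _ ≤ Real.exp (p*B/2) := Real.exp_le_exp.mpr h0
  · have hR1' : (1:ℝ) ≤ R := by exact_mod_cast hR1
    have hx1 : 1 ≤ x := by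
      rw [hR] at hR1
      exact (Nat.floor_pos).mp hR1
    have hx2R : x ≤ 2*R := by
      have h1 : x < R + 1 := by rw [hR]; exact Nat.lt_floor_add_one x
      linarith
    set y : ℝ := Real.exp 1 * B / R with hy
    have hRpos : (0:ℝ) < R := by linarith
    have hxpos' : (0:ℝ) < x := by linarith
    have hBR2 : (2:ℝ) ≤ B/R := by
      rw [le_div_iff₀ hRpos]; linarith
    have he1 : (2:ℝ) ≤ Real.exp 1 := by
      have := Real.add_one_le_exp (1:ℝ); linarith
    have hy2 : (2:ℝ) ≤ y := by
      rw [hy, show Real.exp 1 * B / R = Real.exp 1 * ((B:ℝ)/R) by ring]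
      nlinarith
    have hy0 : (0:ℝ) < y := by linarith
    have hcs : (B+R).choose (B-R) = (B+R).choose (2*R) := by
      rw [show B - R = (B+R) - 2*R by omega]
      exact Nat.choose_symm (by omega)
    have hf1 : (((B+R).choose (B-R)) : ℝ) ≤ y^(2*R) := by
      rw [hcs]
      calc (((B+R).choose (2*R)) : ℝ)
          ≤ (Real.exp 1 * ((B+R:ℕ):ℝ) / ((2*R:ℕ):ℝ))^(2*R) :=
            choose_le_pow_real (by omega)
        _ ≤ y^(2*R) := by
            refine pow_le_pow_left₀ (by positivity) ?_ _
            rw [hy]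
            push_cast
            rw [div_le_div_iff₀ (by positivity) hRpos]
            have hin : ((B:ℝ)+R)*R ≤ 2*R*B := by nlinarith
            nlinarith [mul_le_mul_of_nonneg_left hin (le_of_lt (Real.exp_pos 1))]
    have hf2 : ((B.choose R) : ℝ) ≤ y^R := choose_le_pow_real hR1
    have hf3 : ((2:ℝ))^R ≤ y^R := pow_le_pow_left₀ (by norm_num) hy2 R
    have hN : (((B+R).choose (B-R) * (B.choose R * 2^R) : ℕ) : ℝ) ≤ y^(4*R) := by
      push_cast
      have h12 : (((B+R).choose (B-R)):ℝ) * (((B.choose R):ℝ) * (2:ℝ)^R)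
          ≤ y^(2*R) * (y^R * y^R) := by
        refine mul_le_mul hf1 ?_ (by positivity) (by positivity)
        exact mul_le_mul hf2 hf3 (by positivity) (by positivity)
      calc (((B+R).choose (B-R)):ℝ) * (((B.choose R):ℝ) * (2:ℝ)^R)
          ≤ y^(2*R) * (y^R * y^R) := h12
        _ = y^(4*R) := by
            rw [← pow_add, ← pow_add]
            congr 1
            omega
    have hlogy_nonneg : 0 ≤ Real.log y := Real.log_nonneg (by linarith)
    have hyY : y ≤ Real.exp 1 * 2000 * L * (1/p) := by
      have hBRx : (B:ℝ)/R ≤ 2*B/x := by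
        rw [div_le_div_iff₀ hRpos hxpos']
        have := mul_le_mul_of_nonneg_left hx2R (le_of_lt hBpos)
        linarith
      have h2 : 2*(B:ℝ)/x = 2000*L/p := by
        rw [hx]
        field_simp
        ring
      have h3 : (B:ℝ)/R ≤ 2000*L/p := by rw [← h2]; exact hBRx
      calc y = Real.exp 1 * ((B:ℝ)/R) := by rw [hy]; ring
        _ ≤ Real.exp 1 * (2000*L/p) :=
            mul_le_mul_of_nonneg_left h3 (le_of_lt (Real.exp_pos 1))
        _ = Real.exp 1 * 2000 * L * (1/p) := by ring
    have hlogy : Real.log y ≤ 14*L := by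
      have h1 : Real.log y ≤ Real.log (Real.exp 1 * 2000 * L * (1/p)) := by
        refine Real.log_le_log hy0 hyY
      have hLne : L ≠ 0 := ne_of_gt hL0
      have h2 : Real.log (Real.exp 1 * 2000 * L * (1/p))
          = Real.log (Real.exp 1) + Real.log 2000 + Real.log L + Real.log (1/p) := by
        rw [Real.log_mul (mul_ne_zero (mul_ne_zero (Real.exp_ne_zero 1) (by norm_num)) hLne)
            (by positivity),
          Real.log_mul (mul_ne_zero (Real.exp_ne_zero 1) (by norm_num)) hLne,
          Real.log_mul (Real.exp_ne_zero 1) (by norm_num)]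
      have h3 : Real.log (Real.exp 1) = 1 := Real.log_exp 1
      have h4 : Real.log L ≤ L - 1 := Real.log_le_sub_one_of_pos hL0
      have h5 : Real.log 2000 ≤ 8 := log2000_le
      have h6 : (8:ℝ) ≤ 12*L := by linarith
      rw [h2, h3] at h1
      linarith
    have hexp : y^(4*R) ≤ Real.exp (p*B/2) := by
      have hyexp : y^(4*R) = Real.exp ((4*R : ℕ) * Real.log y) := by
        rw [← Real.exp_log hy0, ← Real.exp_nat_mul, Real.exp_log hy0]
      rw [hyexp]
      refine Real.exp_le_exp.mpr ?_
      rw [show (((4*R:ℕ)):ℝ) = 4*(R:ℝ) by push_cast; ring]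
      have h1 : 4*(R:ℝ) * Real.log y ≤ 4*x * Real.log y :=
        mul_le_mul_of_nonneg_right (by linarith) hlogy_nonneg
      have h1' : 4*x * Real.log y ≤ 4*x*(14*L) :=
        mul_le_mul_of_nonneg_left hlogy (by linarith)
      have h2 : x*L = p*(B:ℝ)/1000 := by
        rw [hx]
        field_simp
      have h3 : 4*x*(14*L) = 56*(x*L) := by ring
      have hpB : 0 ≤ p*(B:ℝ) := by positivity
      rw [h3, h2] at h1'
      linarith
    exact le_trans hN hexp

end Chunk8

section Chunk9

lemma one_sub_exp_ge {t : ℝ} (h0 : 0 ≤ t) (h3 : t ≤ 3) : t/4 ≤ 1 - Real.exp (-t) := by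
  have hpos : (0:ℝ) < 1 + t := by linarith
  have h1 : Real.exp (-t) ≤ 1/(1+t) := by
    rw [Real.exp_neg]
    rw [inv_eq_one_div]
    refine one_div_le_one_div_of_le hpos ?_
    have := Real.add_one_le_exp t
    linarith
  have h2 : 1/(1+t) ≤ 1 - t/4 := by
    rw [div_le_iff₀ hpos]
    nlinarith
  linarith

lemma pow_one_sub_le {p : ℝ} {B : ℕ} (h0 : 0 ≤ p) (h1 : p ≤ 1) :
    (1-p)^B ≤ Real.exp (-(p*B)) := by
  have hs : (1-p) ≤ Real.exp (-p) := by
    have := Real.add_one_le_exp (-p)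
    linarith
  calc (1-p)^B ≤ (Real.exp (-p))^B := pow_le_pow_left₀ (by linarith) hs B
    _ = Real.exp (-(p*B)) := by
        rw [← Real.exp_nat_mul]
        congr 1
        ring

set_option maxHeartbeats 2000000 in
theorem stmt8' :
    ∃ c' : ℝ, 0 < c' ∧
      ∀ (δ : ℝ) (M B : ℕ) (p : ℝ), 0 < δ → δ < 1 → 0 < p → p < 1 / 2 →
        (∀ A : (Fin M → ℕ × ℕ) → Bool, p ≤ failProb δ M A) →
        ∀ Ahat : (Fin M → Fin B → ℕ × ℕ) → List Bool,
          c' * B * p / Real.log (1 / p) ≤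
            ((2 : ℝ) ^ B)⁻¹ * ∑ z : Fin B → Bool, ∑' s : Fin M → Fin B → ℕ × ℕ,
              (∏ m, ∏ b, atomD δ M (z b) (s m b))
                * (editDist (List.ofFn z) (Ahat s) : ℝ) := by
  refine ⟨1/2000, by norm_num, ?_⟩
  intro δ M B p hδ0 hδ1 hp0 hp2 hp Ahat
  have hlog2 : (0.6931:ℝ) ≤ Real.log 2 := le_of_lt (by
    have := Real.log_two_gt_d9; linarith)
  set L := Real.log (1/p) with hLdef
  have h2p : (2:ℝ) ≤ 1/p := by
    rw [le_div_iff₀ hp0]; linarith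
  have hL2 : Real.log 2 ≤ L := by
    rw [hLdef]; exact Real.log_le_log (by norm_num) h2p
  have hL0 : (0:ℝ) < L := lt_of_lt_of_le (by linarith) hL2
  -- convert tsums to finite sums
  have hsum : ∀ z : Fin B → Bool,
      (∑' s : Fin M → Fin B → ℕ × ℕ, (∏ m, ∏ b, atomD δ M (z b) (s m b))
        * (editDist (List.ofFn z) (Ahat s) : ℝ))
      = ∑ s ∈ ΩB M B, W δ M B z s * (editDist (List.ofFn z) (Ahat s) : ℝ) := by
    intro z
    refine tsum_eq_sum ?_
    intro s hs
    rw [show (∏ m, ∏ b, atomD δ M (z b) (s m b)) = W δ M B z s from rfl,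
      W_zero hs, zero_mul]
  rw [Finset.sum_congr rfl (fun z _ => hsum z)]
  set E := ∑ z : Fin B → Bool, ∑ s ∈ ΩB M B,
    W δ M B z s * (editDist (List.ofFn z) (Ahat s) : ℝ) with hE
  have h2B : (0:ℝ) < 2^B := by positivity
  rcases Nat.eq_zero_or_pos B with hB0 | hB1
  · subst hB0
    have hEnn : 0 ≤ E := by
      refine Finset.sum_nonneg fun z _ => Finset.sum_nonneg fun s _ => ?_
      exact mul_nonneg (W_nonneg hδ0 hδ1 z s) (by positivity)
    simp only [Nat.cast_zero, mul_zero, zero_mul, zero_div, pow_zero, inv_one, one_mul]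
    exact hEnn
  -- total mass
  have htot : ∑ z : Fin B → Bool, ∑ s ∈ ΩB M B, W δ M B z s = (2:ℝ)^B := by
    rw [Finset.sum_congr rfl (fun z (_ : z ∈ Finset.univ) => W_sum (δ := δ) z)]
    rw [Finset.sum_const, Finset.card_univ, Fintype.card_fun, Fintype.card_bool,
      Fintype.card_fin, nsmul_eq_mul, mul_one]
    push_cast
    ring
  -- tail bound
  have tail : ∀ k : ℕ,
      ((k:ℝ)+1) * ((2:ℝ)^B - ∑ z : Fin B → Bool, ∑ s ∈ ΩB M B,
        W δ M B z s * (if editDist (List.ofFn z) (Ahat s) ≤ k then 1 else 0)) ≤ E := by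
    intro k
    have hpw : ∀ (z : Fin B → Bool) (s : Fin M → Fin B → ℕ × ℕ),
        ((k:ℝ)+1) * (W δ M B z s - W δ M B z s *
          (if editDist (List.ofFn z) (Ahat s) ≤ k then 1 else 0))
        ≤ W δ M B z s * (editDist (List.ofFn z) (Ahat s) : ℝ) := by
      intro z s
      have hW := W_nonneg hδ0 hδ1 z s
      by_cases hd : editDist (List.ofFn z) (Ahat s) ≤ k
      · rw [if_pos hd, mul_one, sub_self, mul_zero]
        positivity
      · rw [if_neg hd, mul_zero, sub_zero]
        have hk1 : (k:ℝ)+1 ≤ (editDist (List.ofFn z) (Ahat s) : ℝ) := by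
          have : k + 1 ≤ editDist (List.ofFn z) (Ahat s) := Nat.succ_le_of_lt (not_le.mp hd)
          exact_mod_cast this
        calc ((k:ℝ)+1) * W δ M B z s
            ≤ (editDist (List.ofFn z) (Ahat s) : ℝ) * W δ M B z s :=
              mul_le_mul_of_nonneg_right hk1 hW
          _ = W δ M B z s * (editDist (List.ofFn z) (Ahat s) : ℝ) := mul_comm _ _
    calc ((k:ℝ)+1) * ((2:ℝ)^B - ∑ z : Fin B → Bool, ∑ s ∈ ΩB M B,
          W δ M B z s * (if editDist (List.ofFn z) (Ahat s) ≤ k then 1 else 0))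
        = ∑ z : Fin B → Bool, ∑ s ∈ ΩB M B, ((k:ℝ)+1) * (W δ M B z s - W δ M B z s *
            (if editDist (List.ofFn z) (Ahat s) ≤ k then 1 else 0)) := by
          rw [← htot]
          rw [← Finset.sum_sub_distrib]
          rw [Finset.mul_sum]
          refine Finset.sum_congr rfl fun z _ => ?_
          rw [← Finset.sum_sub_distrib, Finset.mul_sum]
      _ ≤ E := by
          rw [hE]
          exact Finset.sum_le_sum fun z _ => Finset.sum_le_sum fun s _ => hpw z s
  by_cases hreg : p * B ≤ 2
  · -- small pB regime : use threshold 0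
    have hS0 : ∑ z : Fin B → Bool, ∑ s ∈ ΩB M B,
        W δ M B z s * (if editDist (List.ofFn z) (Ahat s) ≤ 0 then 1 else 0)
        ≤ 2^B * (1-p)^B := by
      refine le_trans (Finset.sum_le_sum fun z _ => Finset.sum_le_sum fun s _ => ?_)
        (recovery hδ0 hδ1 hp2 hp Ahat)
      refine mul_le_mul_of_nonneg_left ?_ (W_nonneg hδ0 hδ1 z s)
      by_cases hd : editDist (List.ofFn z) (Ahat s) ≤ 0
      · rw [if_pos hd]
        have : List.ofFn z = Ahat s := editDist_eq_zero (Nat.le_zero.mp hd)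
        rw [if_pos this.symm]
      · rw [if_neg hd]
        split_ifs <;> norm_num
    have htail := tail 0
    have hexp := pow_one_sub_le (le_of_lt hp0) (by linarith : p ≤ 1) (B := B)
    have hquarter := one_sub_exp_ge (t := p*B) (by positivity) (by linarith)
    have hEge : (2:ℝ)^B * (p*B/4) ≤ E := by
      have h1 : (2:ℝ)^B - 2^B * (1-p)^B ≤ (2:ℝ)^B - ∑ z : Fin B → Bool, ∑ s ∈ ΩB M B,
          W δ M B z s * (if editDist (List.ofFn z) (Ahat s) ≤ 0 then 1 else 0) := by
        linarith
      have h2 : (2:ℝ)^B * (p*B/4) ≤ 2^B - 2^B * (1-p)^B := by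
        have h3 : (1-p)^B ≤ Real.exp (-(p*B)) := hexp
        nlinarith
      simp only [Nat.cast_zero, zero_add, one_mul] at htail
      linarith
    -- final arithmetic
    have hfin : (1/2000) * (B:ℝ) * p / L ≤ p * B / 4 := by
      rw [div_le_iff₀ hL0]
      have hpB : (0:ℝ) ≤ p * B := by positivity
      nlinarith
    have hfin2 : p * B / 4 ≤ ((2:ℝ)^B)⁻¹ * E := by
      rw [le_inv_mul_iff₀ h2B]
      exact hEge
    linarith
  · -- large pB regime
    push_neg at hreg
    set x : ℝ := p * B / (1000 * L) with hx
    set R : ℕ := ⌊x⌋₊ with hR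
    have hBpos : (0:ℝ) < B := by exact_mod_cast hB1
    have hxpos : 0 ≤ x := by rw [hx]; positivity
    have hRx : (R:ℝ) ≤ x := Nat.floor_le hxpos
    have hxR1 : x < (R:ℝ) + 1 := Nat.lt_floor_add_one x
    have hxB : x ≤ (B:ℝ)/2 := by
      rw [hx, div_le_iff₀ (by positivity)]
      nlinarith
    have hRB : R ≤ B := by
      have h1 : (R:ℝ) ≤ B := by linarith
      exact_mod_cast h1
    have hub := union_bound (R := R) hδ0 hδ1 hp2 hp hRB Ahat
    have hcb := count_bound hB1 hp0 (le_of_lt hp2) (le_of_eq hLdef.symm) hL2 hx hR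
    have hexp := pow_one_sub_le (le_of_lt hp0) (by linarith : p ≤ 1) (B := B)
    have he2 : (2:ℝ) ≤ Real.exp 1 := by
      have := Real.add_one_le_exp (1:ℝ); linarith
    have hSR : ∑ z : Fin B → Bool, ∑ s ∈ ΩB M B,
        W δ M B z s * (if editDist (List.ofFn z) (Ahat s) ≤ R then 1 else 0)
        ≤ (2:ℝ)^B * Real.exp (-1) := by
      have h1 : (((B+R).choose (B-R) * (B.choose R * 2^R) : ℕ) : ℝ) * (2^B * (1-p)^B)
          ≤ Real.exp (p*B/2) * (2^B * Real.exp (-(p*B))) := by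
        refine mul_le_mul hcb ?_ ?_ (by positivity)
        · exact mul_le_mul_of_nonneg_left hexp (by positivity)
        · have hpp : (0:ℝ) ≤ 1 - p := by linarith
          positivity
      have h2 : Real.exp (p*B/2) * ((2:ℝ)^B * Real.exp (-(p*B)))
          = (2:ℝ)^B * Real.exp (p*B/2 - p*B) := by
        rw [show Real.exp (p*(B:ℝ)/2) * ((2:ℝ)^B * Real.exp (-(p*B)))
            = (2:ℝ)^B * (Real.exp (p*(B:ℝ)/2) * Real.exp (-(p*B))) by ring,
          ← Real.exp_add]
        ring_nf
      have h3 : Real.exp (p*B/2 - p*B) ≤ Real.exp (-1) := by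
        refine Real.exp_le_exp.mpr ?_
        linarith
      calc ∑ z : Fin B → Bool, ∑ s ∈ ΩB M B,
            W δ M B z s * (if editDist (List.ofFn z) (Ahat s) ≤ R then 1 else 0)
          ≤ (((B+R).choose (B-R) * (B.choose R * 2^R) : ℕ) : ℝ) * (2^B * (1-p)^B) := hub
        _ ≤ Real.exp (p*B/2) * (2^B * Real.exp (-(p*B))) := h1
        _ = (2:ℝ)^B * Real.exp (p*B/2 - p*B) := h2
        _ ≤ (2:ℝ)^B * Real.exp (-1) := mul_le_mul_of_nonneg_left h3 (by positivity)
    have hinvE : Real.exp (-1) ≤ 1/2 := by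
      rw [Real.exp_neg, inv_eq_one_div]
      exact one_div_le_one_div_of_le (by norm_num) he2
    have htail := tail R
    have hEge : x * ((2:ℝ)^B / 2) ≤ E := by
      have h4 : (2:ℝ)^B / 2 ≤ (2:ℝ)^B - ∑ z : Fin B → Bool, ∑ s ∈ ΩB M B,
          W δ M B z s * (if editDist (List.ofFn z) (Ahat s) ≤ R then 1 else 0) := by
        nlinarith
      have h5 : x * ((2:ℝ)^B / 2) ≤ ((R:ℝ)+1) * ((2:ℝ)^B - ∑ z : Fin B → Bool,
          ∑ s ∈ ΩB M B,
          W δ M B z s * (if editDist (List.ofFn z) (Ahat s) ≤ R then 1 else 0)) := by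
        have h6 : (0:ℝ) ≤ (2:ℝ)^B / 2 := by positivity
        have h7 : x * ((2:ℝ)^B / 2) ≤ ((R:ℝ)+1) * ((2:ℝ)^B / 2) :=
          mul_le_mul_of_nonneg_right (by linarith) h6
        refine le_trans h7 (mul_le_mul_of_nonneg_left h4 (by positivity))
      linarith
    have hfin : (1/2000) * (B:ℝ) * p / L = x/2 := by
      rw [hx]
      field_simp
      ring
    rw [hfin]
    rw [le_inv_mul_iff₀ h2B]
    rw [show (2:ℝ)^B * (x/2) = x * ((2:ℝ)^B/2) by ring]
    exact hEge

end Chunk9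

/-- there is an absolute constant c' > 0 such that if every
M-sample algorithm for the atomic problem fails with probability at least
p ∈ (0, 1/2), then for uniformly random z ∈ {0,1}^B any algorithm receiving
M samples from D_z and outputting ẑ ∈ {0,1}^* has expected edit distance
E[d_edit(z, ẑ)] ≥ c'·B·p/log(1/p). -/
theorem stmt8 :
    ∃ c' : ℝ, 0 < c' ∧
      ∀ (δ : ℝ) (M B : ℕ) (p : ℝ), 0 < δ → δ < 1 → 0 < p → p < 1 / 2 →
        (∀ A : (Fin M → ℕ × ℕ) → Bool, p ≤ failProb δ M A) →
        ∀ Ahat : (Fin M → Fin B → ℕ × ℕ) → List Bool,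
          c' * B * p / Real.log (1 / p) ≤
            ((2 : ℝ) ^ B)⁻¹ * ∑ z : Fin B → Bool, ∑' s : Fin M → Fin B → ℕ × ℕ,
              (∏ m, ∏ b, atomD δ M (z b) (s m b))
                * (editDist (List.ofFn z) (Ahat s) : ℝ) := stmt8'
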